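/- Let c be a configuration of the complete graph K_n with c(v) ≤ n−1 for every vertex v. If there exists an ordering v₁, v₂, …, v_n of the vertices such that c(v_i) ≥ n−i for every i ∈ {1,…,n}, then c is volatile. -/

import Mathlib

/-- Firing vertex `v` in `K_n`: remove `n-1` chips from `v`, add one chip to each other vertex. -/
def fireK (n : ℕ) (c : Fin n → ℕ) (v : Fin n) : Fin n → ℕ :=
  fun u => if u = v then c v - (n - 1) else c u + 1

/-- Configuration after firing `f 0, …, f (m-1)` in order in `K_n`. -/
def fireIterK (n : ℕ) (c : Fin n → ℕ) (f : ℕ → Fin n) : ℕ → Fin n → ℕ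
  | 0 => c
  | m + 1 => fireK n (fireIterK n c f m) (f m)

/-- A configuration of `K_n` is volatile if it admits an infinite legal firing sequence. -/
def VolatileK (n : ℕ) (c : Fin n → ℕ) : Prop :=
  ∃ f : ℕ → Fin n, ∀ m : ℕ, n - 1 ≤ fireIterK n c f m (f m)

/-- Configuration after firing a finite list of vertices in order in `K_n`. -/
def fireListK (n : ℕ) : (Fin n → ℕ) → List (Fin n) → (Fin n → ℕ)
  | c, [] => c
  | c, v :: l => fireListK n (fireK n c v) l

/-- A finite firing list in `K_n` is legal if each fired vertex has at least `n-1` chips. -/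
def LegalListK (n : ℕ) : (Fin n → ℕ) → List (Fin n) → Prop
  | _, [] => True
  | c, v :: l => n - 1 ≤ c v ∧ LegalListK n (fireK n c v) l

lemma roundFormula (n : ℕ) (hn : 1 ≤ n) (c : Fin n → ℕ) (σ : Equiv.Perm (Fin n))
    (hσ : ∀ i : Fin n, n - 1 - (i : ℕ) ≤ c (σ i)) :
    ∀ k, k ≤ n → fireIterK n c (fun m => σ ⟨m % n, Nat.mod_lt m hn⟩) k =
      fun u => if ((σ.symm u : ℕ) < k) then c u + k - n else c u + k := by
  intro k
  induction k with
  | zero => intro _; funext u; simp [fireIterK]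
  | succ k ih =>
    intro hk
    have hkn : k < n := hk
    have hfk : (⟨k % n, Nat.mod_lt k hn⟩ : Fin n) = ⟨k, hkn⟩ := by
      ext; simp [Nat.mod_eq_of_lt hkn]
    show fireK n (fireIterK n c _ k) _ = _
    rw [ih (le_of_lt hkn)]
    funext u
    simp only [fireK, hfk]
    have hcu : n - 1 - ((σ.symm u : Fin n) : ℕ) ≤ c u := by
      have := hσ (σ.symm u); simpa using this
    by_cases hu : u = σ ⟨k, hkn⟩
    · subst hu
      rw [if_pos rfl]
      simp only [Equiv.symm_apply_apply, Fin.val_mk]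
      rw [if_neg (lt_irrefl k), if_pos (Nat.lt_succ_self k)]
      have h2 : n - 1 - k ≤ c (σ ⟨k, hkn⟩) := by simpa using hσ ⟨k, hkn⟩
      omega
    · have hsy : σ.symm u ≠ ⟨k, hkn⟩ := by
        intro hh; apply hu; rw [← hh]; simp
      have hne : ((σ.symm u : Fin n) : ℕ) ≠ k := fun hh => hsy (Fin.ext hh)
      rw [if_neg hu]
      by_cases hlt : ((σ.symm u : Fin n) : ℕ) < k
      · rw [if_pos hlt, if_pos (Nat.lt_succ_of_lt hlt)]
        omega
      · rw [if_neg hlt, if_neg (by omega)]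
        omega

lemma roundId (n : ℕ) (hn : 1 ≤ n) (c : Fin n → ℕ) (σ : Equiv.Perm (Fin n))
    (hσ : ∀ i : Fin n, n - 1 - (i : ℕ) ≤ c (σ i)) :
    fireIterK n c (fun m => σ ⟨m % n, Nat.mod_lt m hn⟩) n = c := by
  rw [roundFormula n hn c σ hσ n le_rfl]
  funext u
  rw [if_pos (σ.symm u).isLt]
  omega

lemma shiftIter (n : ℕ) (hn : 1 ≤ n) (c : Fin n → ℕ) (σ : Equiv.Perm (Fin n))
    (hσ : ∀ i : Fin n, n - 1 - (i : ℕ) ≤ c (σ i)) :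
    ∀ m, fireIterK n c (fun m => σ ⟨m % n, Nat.mod_lt m hn⟩) (n + m) =
      fireIterK n c (fun m => σ ⟨m % n, Nat.mod_lt m hn⟩) m := by
  intro m
  induction m with
  | zero => simpa [fireIterK] using roundId n hn c σ hσ
  | succ m ih =>
    show fireK n (fireIterK n c _ (n + m)) _ = fireK n (fireIterK n c _ m) _
    rw [ih]
    congr 1
    ext
    simp [Nat.add_mod_left]

lemma modIter (n : ℕ) (hn : 1 ≤ n) (c : Fin n → ℕ) (σ : Equiv.Perm (Fin n))
    (hσ : ∀ i : Fin n, n - 1 - (i : ℕ) ≤ c (σ i)) :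
    ∀ m, fireIterK n c (fun m => σ ⟨m % n, Nat.mod_lt m hn⟩) m =
      fireIterK n c (fun m => σ ⟨m % n, Nat.mod_lt m hn⟩) (m % n) := by
  intro m
  induction m using Nat.strong_induction_on with
  | _ m ih =>
    by_cases hm : m < n
    · rw [Nat.mod_eq_of_lt hm]
    · obtain ⟨m', rfl⟩ : ∃ m', m = n + m' := ⟨m - n, by omega⟩
      rw [shiftIter n hn c σ hσ, ih m' (by omega), Nat.add_mod_left]

/-- If `c(v) ≤ n-1` for all `v` and there is an ordering `v₁,…,v_n` of the
vertices of `K_n` with `c(v_i) ≥ n - i` (here 0-indexed: `c (σ i) ≥ n - 1 - i`), then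
`c` is volatile. -/
theorem stmt3 (n : ℕ) (hn : 1 ≤ n) (c : Fin n → ℕ) (hc : ∀ v, c v ≤ n - 1)
    (h : ∃ σ : Equiv.Perm (Fin n), ∀ i : Fin n, n - 1 - (i : ℕ) ≤ c (σ i)) :
    VolatileK n c := by
  obtain ⟨σ, hσ⟩ := h
  refine ⟨fun m => σ ⟨m % n, Nat.mod_lt m hn⟩, fun m => ?_⟩
  rw [modIter n hn c σ hσ m,
    roundFormula n hn c σ hσ (m % n) (le_of_lt (Nat.mod_lt m hn))]
  have hr : m % n < n := Nat.mod_lt m hn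
  simp only [Equiv.symm_apply_apply, Fin.val_mk]
  rw [if_neg (lt_irrefl _)]
  have := hσ ⟨m % n, hr⟩
  simp only [Fin.val_mk] at this
  omega
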